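/- Let A, X₁, …, X_m be (n+1)×(n+1) matrices whose entries are polynomials in x over ℚ, with 1 ≤ m ≤ n, and define γ_A(X₁, …, X_m) = Σ_{S,σ} det(A_{S,σ}), the sum over all m-element subsets S of the column indices {0, …, n} and all permutations σ of {1, …, m}, where A_{S,σ} replaces column j_k of A by column j_k of X_{σ(k)}. Then the formal derivative satisfies (d/dx) γ_A(X₁, …, X_m) = γ_A(A', X₁, …, X_m) + Σ_{j=1}^{m} γ_A(X₁, …, X_{j−1}, X_j', X_{j+1}, …, X_m), where A' and X_j' denote entrywise formal derivatives. -/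

import Mathlib

open Polynomial Finset

private lemma polyDerivProd {ι : Type*} [DecidableEq ι] (s : Finset ι) (f : ι → ℚ[X]) :
    derivative (∏ i ∈ s, f i) = ∑ b ∈ s, (∏ a ∈ s.erase b, f a) * derivative (f b) := by
  induction s using Finset.induction_on with
  | empty => simp
  | insert _ _ h ih =>
    rename_i a s
    rw [Finset.prod_insert h, derivative_mul, ih, Finset.sum_insert h, Finset.erase_insert h,
      Finset.mul_sum]
    congr 1
    · exact mul_comm _ _
    · refine Finset.sum_congr rfl fun b hb => ?_
      have hab : a ≠ b := fun e => h (e ▸ hb)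
      rw [Finset.erase_insert_of_ne hab, Finset.prod_insert (fun e => h (Finset.erase_subset _ _ e)),
        ← mul_assoc]

private lemma deriv_det {N : ℕ} (M : Matrix (Fin N) (Fin N) ℚ[X]) :
    derivative M.det
      = ∑ c : Fin N, (M.updateCol c fun i => derivative (M i c)).det := by
  simp only [Matrix.det_apply']
  rw [map_sum, Finset.sum_comm]
  refine Finset.sum_congr rfl fun σ _ => ?_
  rw [derivative_mul, derivative_intCast, zero_mul, zero_add, polyDerivProd, Finset.mul_sum]
  refine Finset.sum_congr rfl fun c _ => ?_
  congr 1
  have h : (fun i => (M.updateCol c fun i => derivative (M i c)) (σ i) i)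
      = Function.update (fun i => M (σ i) i) c (derivative (M (σ c) c)) := by
    funext i
    by_cases h : i = c
    · subst h; simp [Matrix.updateCol_apply]
    · simp [Matrix.updateCol_apply, Function.update_apply, h]
  rw [h, Finset.prod_update_of_mem (Finset.mem_univ c), ← Finset.erase_eq, mul_comm]

/-- `A_{S,σ}` encoded via the injection `ψ`: column `ψ l` of `A` is replaced by
column `ψ l` of `Xs l`, for each `l`. -/
noncomputable def replaceCols {n m : ℕ} (A : Matrix (Fin (n + 1)) (Fin (n + 1)) ℚ[X])
    (Xs : Fin m → Matrix (Fin (n + 1)) (Fin (n + 1)) ℚ[X]) (ψ : Fin m ↪ Fin (n + 1)) :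
    Matrix (Fin (n + 1)) (Fin (n + 1)) ℚ[X] :=
  Matrix.of fun i j => if h : ∃ l, ψ l = j then Xs h.choose i j else A i j

private lemma replaceCols_apply_mem {n m : ℕ} (A : Matrix (Fin (n + 1)) (Fin (n + 1)) ℚ[X])
    (Xs : Fin m → Matrix (Fin (n + 1)) (Fin (n + 1)) ℚ[X]) (ψ : Fin m ↪ Fin (n + 1))
    (i : Fin (n + 1)) (l : Fin m) :
    replaceCols A Xs ψ i (ψ l) = Xs l i (ψ l) := by
  have h : ∃ l', ψ l' = ψ l := ⟨l, rfl⟩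
  simp only [replaceCols, Matrix.of_apply, dif_pos h]
  rw [ψ.injective h.choose_spec]

private lemma replaceCols_apply_not {n m : ℕ} (A : Matrix (Fin (n + 1)) (Fin (n + 1)) ℚ[X])
    (Xs : Fin m → Matrix (Fin (n + 1)) (Fin (n + 1)) ℚ[X]) (ψ : Fin m ↪ Fin (n + 1))
    (i j : Fin (n + 1)) (h : ∀ l, ψ l ≠ j) :
    replaceCols A Xs ψ i j = A i j := by
  simp only [replaceCols, Matrix.of_apply]
  exact dif_neg (fun ⟨l, hl⟩ => h l hl)

private noncomputable def consEmb {n m : ℕ} (c : Fin (n + 1)) (ψ : Fin m ↪ Fin (n + 1))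
    (hc : ∀ l, ψ l ≠ c) : Fin (m + 1) ↪ Fin (n + 1) :=
  ⟨Fin.cons c ψ, Fin.cons_injective_iff.2 ⟨fun ⟨l, hl⟩ => hc l hl, ψ.injective⟩⟩

/-- `γ_A(X₁, …, X_m) = Σ_{S,σ} det (A_{S,σ})`, the sum over all `m`-element subsets `S`
of the column indices and all permutations `σ` of `{1,…,m}` (equivalently, over all
injections `ψ : Fin m ↪ Fin (n+1)`). -/
noncomputable def gamma {n m : ℕ} (A : Matrix (Fin (n + 1)) (Fin (n + 1)) ℚ[X])
    (Xs : Fin m → Matrix (Fin (n + 1)) (Fin (n + 1)) ℚ[X]) : ℚ[X] :=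
  ∑ ψ : Fin m ↪ Fin (n + 1), (replaceCols A Xs ψ).det

private lemma updateA {n m : ℕ} (A : Matrix (Fin (n + 1)) (Fin (n + 1)) ℚ[X])
    (Xs : Fin m → Matrix (Fin (n + 1)) (Fin (n + 1)) ℚ[X]) (ψ : Fin m ↪ Fin (n + 1))
    (c : Fin (n + 1)) (hc : ∀ l, ψ l ≠ c) :
    (replaceCols A Xs ψ).updateCol c (fun i => derivative ((replaceCols A Xs ψ) i c))
      = replaceCols A (Fin.cons (A.map fun p => derivative p) Xs) (consEmb c ψ hc) := by
  ext i j
  by_cases hr : ∃ k : Fin (m + 1), (consEmb c ψ hc) k = j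
  · obtain ⟨k, hk⟩ := hr
    have hR : replaceCols A (Fin.cons (A.map fun p => derivative p) Xs) (consEmb c ψ hc) i j
        = (Fin.cons (A.map fun p => derivative p) Xs : Fin (m + 1) → Matrix (Fin (n + 1)) (Fin (n + 1)) ℚ[X]) k i j := by
      rw [← hk]; exact replaceCols_apply_mem _ _ _ i k
    rw [hR]
    induction k using Fin.cases with
    | zero =>
      have hjc : j = c := by rw [← hk]; rfl
      rw [Fin.cons_zero, hjc, Matrix.updateCol_self, replaceCols_apply_not A Xs ψ i c hc]
      rfl
    | succ l =>
      have hjl : j = ψ l := by rw [← hk]; rfl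
      have hjc : j ≠ c := hjl ▸ hc l
      rw [Matrix.updateCol_ne hjc, hjl, Fin.cons_succ, replaceCols_apply_mem]
  · push_neg at hr
    have hjc : j ≠ c := fun e => hr 0 (by simp [consEmb, e])
    have hrψ : ∀ l, ψ l ≠ j := fun l e => hr l.succ (by simpa [consEmb] using e)
    rw [Matrix.updateCol_ne hjc, replaceCols_apply_not A Xs ψ i j hrψ,
      replaceCols_apply_not _ _ _ i j hr]

private lemma updateB {n m : ℕ} (A : Matrix (Fin (n + 1)) (Fin (n + 1)) ℚ[X])
    (Xs : Fin m → Matrix (Fin (n + 1)) (Fin (n + 1)) ℚ[X]) (ψ : Fin m ↪ Fin (n + 1))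
    (l : Fin m) :
    (replaceCols A Xs ψ).updateCol (ψ l) (fun i => derivative ((replaceCols A Xs ψ) i (ψ l)))
      = replaceCols A (Function.update Xs l ((Xs l).map fun p => derivative p)) ψ := by
  ext i j
  by_cases hj : j = ψ l
  · rw [hj, Matrix.updateCol_self, replaceCols_apply_mem, replaceCols_apply_mem]
    simp
  · rw [Matrix.updateCol_ne hj]
    by_cases hr : ∃ l', ψ l' = j
    · obtain ⟨l', hl'⟩ := hr
      have hll : l' ≠ l := fun e => hj (by rw [← hl', e])
      rw [← hl', replaceCols_apply_mem, replaceCols_apply_mem, Function.update_of_ne hll]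
    · push_neg at hr
      rw [replaceCols_apply_not A Xs ψ i j hr, replaceCols_apply_not A _ ψ i j hr]

/-- Differentiation rule for the γ-operator. -/
theorem stmt_15 (n m : ℕ) (hm1 : 1 ≤ m) (hm : m ≤ n)
    (A : Matrix (Fin (n + 1)) (Fin (n + 1)) ℚ[X])
    (Xs : Fin m → Matrix (Fin (n + 1)) (Fin (n + 1)) ℚ[X]) :
    derivative (gamma A Xs)
      = gamma A (Fin.cons (A.map fun p => derivative p) Xs)
        + ∑ j : Fin m, gamma A (Function.update Xs j ((Xs j).map fun p => derivative p)) := by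
  classical
  unfold gamma
  rw [map_sum]
  simp only [deriv_det]
  have split : ∀ ψ : Fin m ↪ Fin (n + 1),
      (∑ c : Fin (n + 1),
        ((replaceCols A Xs ψ).updateCol c fun i => derivative ((replaceCols A Xs ψ) i c)).det)
      = (∑ c ∈ (Finset.univ.image ψ)ᶜ,
          ((replaceCols A Xs ψ).updateCol c fun i => derivative ((replaceCols A Xs ψ) i c)).det)
        + ∑ l : Fin m,
            ((replaceCols A Xs ψ).updateCol (ψ l)
              fun i => derivative ((replaceCols A Xs ψ) i (ψ l))).det := by
    intro ψ
    set F : Fin (n + 1) → ℚ[X] := fun c =>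
      ((replaceCols A Xs ψ).updateCol c fun i => derivative ((replaceCols A Xs ψ) i c)).det
      with hF
    rw [← Finset.sum_add_sum_compl (Finset.univ.image ψ) F, add_comm]
    congr 1
    exact (Finset.sum_image (f := F) (g := (ψ : Fin m → Fin (n + 1))) (fun x _ y _ h => ψ.injective h))
  simp only [split, Finset.sum_add_distrib]
  congr 1
  · rw [Finset.sum_sigma']
    refine Finset.sum_bij' (i := fun p hp => consEmb p.2 p.1 ?_)
      (j := fun φ _ => ⟨⟨fun l => φ l.succ, fun a b h => Fin.succ_injective _ (φ.injective h)⟩,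
        φ 0⟩) ?_ ?_ ?_ ?_ ?_
    · intro l e
      rw [Finset.mem_sigma, Finset.mem_compl, Finset.mem_image] at hp
      exact hp.2 ⟨l, Finset.mem_univ l, e⟩
    · intro a ha; exact Finset.mem_univ _
    · intro φ _
      rw [Finset.mem_sigma, Finset.mem_compl, Finset.mem_image]
      refine ⟨Finset.mem_univ _, ?_⟩
      rintro ⟨l, -, hl⟩
      exact Fin.succ_ne_zero l (φ.injective hl)
    · intro p hp
      rcases p with ⟨ψ, c⟩
      refine Sigma.ext ?_ (heq_of_eq ?_)
      · exact Function.Embedding.ext fun l => by simp [consEmb]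
      · simp [consEmb]
    · intro φ _
      refine Function.Embedding.ext fun k => ?_
      induction k using Fin.cases with
      | zero => simp [consEmb]
      | succ l => simp [consEmb]; rfl
    · intro p hp
      exact congrArg Matrix.det (updateA A Xs p.1 p.2 _)
  · rw [Finset.sum_comm]
    refine Finset.sum_congr rfl fun l _ => Finset.sum_congr rfl fun ψ _ => ?_
    exact congrArg Matrix.det (updateB A Xs ψ l)
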